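/- Let (V, b_V) and (W, b_W) be finite-dimensional complex vector spaces equipped with Hermitian forms, and let f : V → W be a linear map. Then f admits an adjoint if and only if f(Ker b_V) ⊆ Ker b_W. -/

import Mathlib

open Module

/-- Rank is preserved by a `starRingEnd ℂ`-semilinear equivalence. -/
lemma finrank_eq_of_starSemilinearEquiv {M N : Type*} [AddCommGroup M] [Module ℂ M]
    [AddCommGroup N] [Module ℂ N] (e : M ≃ₛₗ[starRingEnd ℂ] N) :
    finrank ℂ M = finrank ℂ N := by
  have hb : Function.Bijective (starRingEnd ℂ) :=
    ⟨fun a b h => by simpa using congrArg (starRingEnd ℂ) h,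
     fun a => ⟨starRingEnd ℂ a, by simp⟩⟩
  have hr := lift_rank_eq_of_equiv_equiv (R := ℂ) (R' := ℂ) (M := M) (M' := N)
    (starRingEnd ℂ : ℂ → ℂ) e.toAddEquiv hb (fun r m => e.map_smul' r m)
  have h2 := congrArg Cardinal.toNat hr
  simpa [Module.finrank] using h2

/-- Conjugation identifies the semilinear dual with the ordinary dual, conj-semilinearly. -/
noncomputable def conjDualEquiv (V : Type*) [AddCommGroup V] [Module ℂ V] :
    (V →ₛₗ[starRingEnd ℂ] ℂ) ≃ₛₗ[starRingEnd ℂ] (V →ₗ[ℂ] ℂ) where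
  toFun φ :=
    { toFun := fun y => starRingEnd ℂ (φ y)
      map_add' := by intro a b; simp
      map_smul' := by intro c a; simp [map_smulₛₗ] }
  invFun ψ :=
    { toFun := fun y => starRingEnd ℂ (ψ y)
      map_add' := by intro a b; simp
      map_smul' := by intro c a; simp }
  left_inv φ := by ext y; simp
  right_inv ψ := by ext y; simp
  map_add' φ₁ φ₂ := by ext y; simp
  map_smul' c φ := by
    ext y
    simp [LinearMap.smul_apply, smul_eq_mul, map_mul]

/-- A linear map `f : V → W` between finite-dimensional complex vector
spaces equipped with Hermitian forms admits an adjoint if and only if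
`f (Ker b_V) ⊆ Ker b_W`. -/
theorem adjoint_exists_iff_maps_kernel
    {V W : Type*} [AddCommGroup V] [Module ℂ V] [FiniteDimensional ℂ V]
    [AddCommGroup W] [Module ℂ W] [FiniteDimensional ℂ W]
    (bV : V →ₗ[ℂ] V →ₛₗ[starRingEnd ℂ] ℂ)
    (hbV : ∀ x y : V, bV x y = starRingEnd ℂ (bV y x))
    (bW : W →ₗ[ℂ] W →ₛₗ[starRingEnd ℂ] ℂ)
    (hbW : ∀ x y : W, bW x y = starRingEnd ℂ (bW y x))
    (f : V →ₗ[ℂ] W) :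
    (∃ g : W →ₗ[ℂ] V, ∀ (x : W) (y : V), bV (g x) y = bW x (f y)) ↔
      Submodule.map f (LinearMap.ker bV) ≤ LinearMap.ker bW := by
  constructor
  · rintro ⟨g, hg⟩ x hx
    rw [Submodule.mem_map] at hx
    obtain ⟨y, hy, rfl⟩ := hx
    rw [LinearMap.mem_ker] at hy ⊢
    ext w
    have h1 : bW w (f y) = 0 := by
      rw [← hg w y, hbV]
      simp [hy]
    rw [hbW, h1]
    simp
  · intro h
    set K := LinearMap.ker bV with hK
    set R := LinearMap.range bV with hR
    set E := conjDualEquiv V with hE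
    set R' : Submodule ℂ (V →ₗ[ℂ] ℂ) := Submodule.map (E : (V →ₛₗ[starRingEnd ℂ] ℂ) →ₛₗ[starRingEnd ℂ] (V →ₗ[ℂ] ℂ)) R with hR'
    -- `R'` equals the dual annihilator of `K`
    have hle : R' ≤ K.dualAnnihilator := by
      rintro _ ⟨φ, hφ, rfl⟩
      obtain ⟨v, rfl⟩ := hφ
      rw [Submodule.mem_dualAnnihilator]
      intro y hy
      show starRingEnd ℂ (bV v y) = 0
      rw [hbV v y]
      rw [LinearMap.mem_ker] at hy
      simp [hy]
    have hfr : finrank ℂ R' = finrank ℂ (K.dualAnnihilator) := by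
      have h1 : finrank ℂ R' = finrank ℂ R :=
        (finrank_eq_of_starSemilinearEquiv (E.submoduleMap R)).symm
      have h2 : finrank ℂ R + finrank ℂ K = finrank ℂ V :=
        LinearMap.finrank_range_add_finrank_ker bV
      have h3 : finrank ℂ (K.dualAnnihilator) = finrank ℂ (V ⧸ K) :=
        (Subspace.quotEquivAnnihilator K).finrank_eq.symm
      have h4 : finrank ℂ (V ⧸ K) + finrank ℂ K = finrank ℂ V :=
        Submodule.finrank_quotient_add_finrank K
      omega
    have hRA : R' = K.dualAnnihilator :=
      Submodule.eq_of_le_of_finrank_eq hle hfr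
    -- the candidate for `bV ∘ g`
    set T : W →ₗ[ℂ] (V →ₛₗ[starRingEnd ℂ] ℂ) :=
      { toFun := fun x => (bW x).comp f
        map_add' := by intro a b; ext y; simp
        map_smul' := by intro c a; ext y; simp } with hT
    have hmem : ∀ x : W, T x ∈ R := by
      intro x
      have hET : E (T x) ∈ K.dualAnnihilator := by
        rw [Submodule.mem_dualAnnihilator]
        intro y hy
        have hfy : f y ∈ LinearMap.ker bW := h ⟨y, hy, rfl⟩
        rw [LinearMap.mem_ker] at hfy
        show starRingEnd ℂ (bW x (f y)) = 0
        rw [hbW x (f y), hfy]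
        simp
      rw [← hRA] at hET
      obtain ⟨φ, hφ, hφE⟩ := hET
      have := E.injective hφE
      rwa [← this]
    -- build a linear right inverse of `bV.rangeRestrict`
    obtain ⟨s, hs⟩ := bV.rangeRestrict.exists_rightInverse_of_surjective
      (LinearMap.range_rangeRestrict bV)
    refine ⟨s.comp (T.codRestrict R hmem), fun x y => ?_⟩
    have key : bV (s.comp (T.codRestrict R hmem) x) = T x := by
      have := congrArg (fun u => (u (T.codRestrict R hmem x) : V →ₛₗ[starRingEnd ℂ] ℂ)) hs
      simpa using this
    rw [key]
    rfl
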